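/- Suppose that I is injective, that K : X → W is a bounded conjugate-linear operator satisfying (J z)(K Y) = ⟨I Y, z⟩ for all z ∈ H and Y ∈ X, and that the sesquilinear form (Y,Z) ↦ (T Y)(K Z) on X is Hermitian, i.e. (T Y)(K Z) = conj((T Z)(K Y)) for all Y, Z ∈ X. Let λ ∈ ℂ with Im λ ≠ 0. If the operator T − λ·(J∘I) : X → W* is Fredholm of index 0 (finite-dimensional kernel, closed range whose codimension is finite and equals the dimension of the kernel), then T − λ·(J∘I) is bijective with bounded inverse. -/

import Mathlib

noncomputable section

/-- `T` is a Fredholm operator of index `0`: finite-dimensional kernel, closed range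
whose (finite) codimension equals the dimension of the kernel. -/
def FredholmIndexZero {X D : Type*}
    [NormedAddCommGroup X] [NormedSpace ℂ X]
    [NormedAddCommGroup D] [NormedSpace ℂ D] (T : X →L[ℂ] D) : Prop :=
  FiniteDimensional ℂ (LinearMap.ker (T : X →ₗ[ℂ] D)) ∧
  IsClosed (LinearMap.range (T : X →ₗ[ℂ] D) : Set D) ∧
  FiniteDimensional ℂ (D ⧸ LinearMap.range (T : X →ₗ[ℂ] D)) ∧
  Module.finrank ℂ (D ⧸ LinearMap.range (T : X →ₗ[ℂ] D)) = Module.finrank ℂ (LinearMap.ker (T : X →ₗ[ℂ] D))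

set_option synthInstance.maxHeartbeats 1000000 in
theorem stmt13 {H X W : Type*}
    [NormedAddCommGroup H] [InnerProductSpace ℂ H] [CompleteSpace H]
    [NormedAddCommGroup X] [NormedSpace ℂ X] [CompleteSpace X]
    [NormedAddCommGroup W] [NormedSpace ℂ W] [CompleteSpace W]
    (T : X →L[ℂ] (W →L[ℂ] ℂ)) (I : X →L[ℂ] H) (J : H →L[ℂ] (W →L[ℂ] ℂ))
    (hIinj : Function.Injective I)
    (K : X →SL[starRingEnd ℂ] W)
    (hK : ∀ (z : H) (Y : X), (J z) (K Y) = (inner ℂ (I Y) z : ℂ))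
    (hHerm : ∀ Y Z : X, (T Y) (K Z) = star ((T Z) (K Y)))
    (lam : ℂ) (hlam : lam.im ≠ 0)
    (hFred : FredholmIndexZero (T - lam • J.comp I)) :
    Function.Bijective (T - lam • J.comp I) ∧
    ∃ S : (W →L[ℂ] ℂ) →L[ℂ] X,
      (∀ Y : X, S ((T - lam • J.comp I) Y) = Y) ∧
      (∀ F : W →L[ℂ] ℂ, (T - lam • J.comp I) (S F) = F) := by
  set A := T - lam • J.comp I with hA
  -- kernel is trivial
  have hker : LinearMap.ker (A : X →ₗ[ℂ] (W →L[ℂ] ℂ)) = ⊥ := by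
    rw [LinearMap.ker_eq_bot']
    intro Y hY
    have hTY : T Y = lam • J (I Y) := by
      have : A Y = 0 := hY
      simp only [hA, ContinuousLinearMap.sub_apply, ContinuousLinearMap.smul_apply,
        ContinuousLinearMap.comp_apply, sub_eq_zero] at this
      exact this
    have h1 : (T Y) (K Y) = lam * (inner ℂ (I Y) (I Y) : ℂ) := by
      rw [hTY]; simp [hK (I Y) Y]
    have h2 : (T Y) (K Y) = star ((T Y) (K Y)) := hHerm Y Y
    have him : ((T Y) (K Y)).im = 0 := by
      have := congrArg Complex.im h2
      simp [Complex.conj_im] at this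
      linarith
    have hinner : (inner ℂ (I Y) (I Y) : ℂ) = (‖I Y‖ : ℂ) ^ 2 := by
      rw [inner_self_eq_norm_sq_to_K]; norm_cast
    rw [h1, hinner] at him
    have : lam.im * ‖I Y‖ ^ 2 = 0 := by
      rw [show ((‖I Y‖ : ℂ)) ^ 2 = ((‖I Y‖ ^ 2 : ℝ) : ℂ) by push_cast; ring] at him
      simp only [Complex.mul_im, Complex.ofReal_im, Complex.ofReal_re, mul_zero,
        zero_add] at him
      exact him
    have hnorm : ‖I Y‖ = 0 := by
      rcases mul_eq_zero.mp this with h | h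
      · exact absurd h hlam
      · exact pow_eq_zero_iff (by norm_num) |>.mp h
    have : I Y = 0 := norm_eq_zero.mp hnorm
    have : I Y = I 0 := by simpa using this
    exact hIinj this
  -- range is everything
  obtain ⟨hfk, hcl, hfq, hind⟩ := hFred
  have hkz : Module.finrank ℂ (LinearMap.ker (A : X →ₗ[ℂ] (W →L[ℂ] ℂ))) = 0 := by
    rw [hker]; exact finrank_bot ℂ X
  have hq : Module.finrank ℂ ((W →L[ℂ] ℂ) ⧸ LinearMap.range (A : X →ₗ[ℂ] (W →L[ℂ] ℂ))) = 0 := by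
    rw [hind, hkz]
  haveI := hfq
  have hsub : Subsingleton ((W →L[ℂ] ℂ) ⧸ LinearMap.range (A : X →ₗ[ℂ] (W →L[ℂ] ℂ))) :=
    Module.finrank_zero_iff.mp hq
  have hrange : LinearMap.range (A : X →ₗ[ℂ] (W →L[ℂ] ℂ)) = ⊤ :=
    Submodule.Quotient.subsingleton_iff.mp hsub
  have hbij : Function.Bijective A :=
    ⟨LinearMap.ker_eq_bot.mp hker, LinearMap.range_eq_top.mp hrange⟩
  refine ⟨hbij, ?_⟩
  let e := ContinuousLinearEquiv.ofBijective A hker hrange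
  refine ⟨e.symm.toContinuousLinearMap, ?_, ?_⟩
  · intro Y
    exact e.symm_apply_apply Y
  · intro F
    exact e.apply_symm_apply F
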